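/- If ω → ∞ then K_ν(ω) ~ √(π/2) e^{-ω} ω^{-1/2}, i.e. lim_{ω→∞} K_ν(ω) e^{ω} ω^{1/2} = √(π/2), for the modified Bessel function K_ν of fixed order ν. -/

import Mathlib

open MeasureTheory Real Filter

/-- Modified Bessel function of the third kind. -/
noncomputable def besselK (ν x : ℝ) : ℝ :=
  (1 / 2) * ∫ y in Set.Ioi (0 : ℝ), y ^ (ν - 1) * Real.exp (-x * (y + y⁻¹) / 2)

lemma besselK_sqrt_tendsto_atTop : Tendsto Real.sqrt atTop atTop := by
  refine tendsto_atTop_atTop.2 fun b => ⟨b ^ 2, fun a ha => ?_⟩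
  calc b ≤ |b| := le_abs_self b
    _ = Real.sqrt (b ^ 2) := (Real.sqrt_sq_eq_abs b).symm
    _ ≤ Real.sqrt a := Real.sqrt_le_sqrt ha

/-- Substitution `y = exp u` in the Bessel integral. -/
lemma besselK_exp_subst (ν ω : ℝ) :
    (∫ y in Set.Ioi (0 : ℝ), y ^ (ν - 1) * Real.exp (-ω * (y + y⁻¹) / 2))
      = ∫ u : ℝ, Real.exp (ν * u - ω * Real.cosh u) := by
  have himg : Real.exp '' Set.univ = Set.Ioi 0 := by
    rw [Set.image_univ, Real.range_exp]
  rw [← himg, integral_image_eq_integral_abs_deriv_smul MeasurableSet.univ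
      (fun x _ => (Real.hasDerivAt_exp x).hasDerivWithinAt)
      (Real.exp_injective.injOn) _]
  rw [Measure.restrict_univ]
  refine integral_congr_ae (Filter.Eventually.of_forall fun u => ?_)
  have h1 : (Real.exp u) ^ (ν - 1) = Real.exp (u * (ν - 1)) := by
    rw [Real.rpow_def_of_pos (Real.exp_pos u), Real.log_exp]
  have h2 : (Real.exp u + (Real.exp u)⁻¹) / 2 = Real.cosh u := by
    rw [Real.cosh_eq, Real.exp_neg]
  simp only [smul_eq_mul]
  rw [abs_of_pos (Real.exp_pos u), h1]
  rw [show -ω * (Real.exp u + (Real.exp u)⁻¹) / 2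
      = -ω * ((Real.exp u + (Real.exp u)⁻¹) / 2) by ring, h2]
  rw [← Real.exp_add, ← Real.exp_add]
  ring_nf

/-- The key representation for positive `ω`. -/
lemma besselK_key (ν ω : ℝ) (hω : 0 < ω) :
    besselK ν ω * Real.exp ω * Real.sqrt ω
      = (1 / 2) * ∫ s : ℝ, Real.exp (ν * (s / Real.sqrt ω)
          - ω * (Real.cosh (s / Real.sqrt ω) - 1)) := by
  have ha : (0 : ℝ) < Real.sqrt ω := Real.sqrt_pos.2 hω
  have h1 := besselK_exp_subst ν ω
  have h2 : Real.exp ω * ∫ u : ℝ, Real.exp (ν * u - ω * Real.cosh u)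
      = ∫ u : ℝ, Real.exp (ν * u - ω * (Real.cosh u - 1)) := by
    rw [← integral_const_mul]
    refine integral_congr_ae (Filter.Eventually.of_forall fun u => ?_)
    simp only [← Real.exp_add]
    ring_nf
  have h3 : (∫ s : ℝ, Real.exp (ν * (s / Real.sqrt ω)
        - ω * (Real.cosh (s / Real.sqrt ω) - 1)))
      = Real.sqrt ω * ∫ u : ℝ, Real.exp (ν * u - ω * (Real.cosh u - 1)) := by
    have := MeasureTheory.Measure.integral_comp_div
      (fun u : ℝ => Real.exp (ν * u - ω * (Real.cosh u - 1))) (Real.sqrt ω)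
    rw [this, smul_eq_mul, abs_of_pos ha]
  rw [h3, besselK, h1, ← h2]
  ring

lemma besselK_sinh_div_tendsto :
    Tendsto (fun x : ℝ => Real.sinh x / x) (nhdsWithin 0 {(0:ℝ)}ᶜ) (nhds 1) := by
  have h := Real.hasDerivAt_sinh 0
  rw [hasDerivAt_iff_tendsto_slope] at h
  rw [Real.cosh_zero] at h
  refine h.congr fun x => ?_
  simp [slope_def_field, Real.sinh_zero]

lemma besselK_cosh_limit (s : ℝ) :
    Tendsto (fun ω : ℝ => ω * (Real.cosh (s / Real.sqrt ω) - 1)) atTop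
      (nhds (s ^ 2 / 2)) := by
  rcases eq_or_ne s 0 with rfl | hs
  · simp only [zero_div, Real.cosh_zero, sub_self, mul_zero]
    norm_num
  · have hx : Tendsto (fun ω : ℝ => s / (2 * Real.sqrt ω)) atTop
        (nhdsWithin 0 {(0:ℝ)}ᶜ) := by
      apply tendsto_nhdsWithin_of_tendsto_nhds_of_eventually_within
      · exact Tendsto.div_atTop tendsto_const_nhds
          (Tendsto.const_mul_atTop two_pos besselK_sqrt_tendsto_atTop)
      · filter_upwards [eventually_gt_atTop (0 : ℝ)] with ω hω
        have : (0 : ℝ) < Real.sqrt ω := Real.sqrt_pos.2 hω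
        simp only [Set.mem_compl_iff, Set.mem_singleton_iff]
        positivity
    have hmain : Tendsto (fun ω : ℝ =>
        s ^ 2 / 2 * (Real.sinh (s / (2 * Real.sqrt ω)) / (s / (2 * Real.sqrt ω))) ^ 2)
        atTop (nhds (s ^ 2 / 2 * 1 ^ 2)) :=
      Tendsto.const_mul _ (((besselK_sinh_div_tendsto).comp hx).pow 2)
    rw [show s ^ 2 / 2 * 1 ^ 2 = s ^ 2 / 2 by ring] at hmain
    refine hmain.congr' ?_
    filter_upwards [eventually_gt_atTop (0 : ℝ)] with ω hω
    have ha : (0 : ℝ) < Real.sqrt ω := Real.sqrt_pos.2 hω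
    have hsq : Real.sqrt ω ^ 2 = ω := Real.sq_sqrt hω.le
    set x := s / (2 * Real.sqrt ω) with hxdef
    have hx0 : x ≠ 0 := by
      rw [hxdef]; positivity
    have hu : s / Real.sqrt ω = 2 * x := by
      rw [hxdef]; field_simp
    have hcosh : Real.cosh (2 * x) = 2 * Real.sinh x ^ 2 + 1 := by
      rw [Real.cosh_two_mul, Real.cosh_sq]; ring
    rw [hu, hcosh]
    have hx2 : x ^ 2 = s ^ 2 / (4 * ω) := by
      rw [hxdef, div_pow]; rw [mul_pow, hsq]; norm_num
    field_simp
    rw [hx2]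
    field_simp
    ring

lemma besselK_pointwise (ν s : ℝ) :
    Tendsto (fun ω : ℝ => Real.exp (ν * (s / Real.sqrt ω)
        - ω * (Real.cosh (s / Real.sqrt ω) - 1))) atTop
      (nhds (Real.exp (-(s ^ 2) / 2))) := by
  have hA : Tendsto (fun ω : ℝ => ν * (s / Real.sqrt ω)) atTop (nhds 0) := by
    have : Tendsto (fun ω : ℝ => s / Real.sqrt ω) atTop (nhds 0) :=
      Tendsto.div_atTop tendsto_const_nhds besselK_sqrt_tendsto_atTop
    simpa using this.const_mul ν
  have hB := besselK_cosh_limit s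
  have := (hA.sub hB)
  rw [show (0 : ℝ) - s ^ 2 / 2 = -(s ^ 2) / 2 by ring] at this
  exact (Real.continuous_exp.continuousAt).tendsto.comp this

lemma besselK_sq_le_sinh_sq (x : ℝ) : x ^ 2 ≤ Real.sinh x ^ 2 := by
  rcases le_or_gt 0 x with hx | hx
  · have := Real.self_le_sinh_iff.2 hx
    nlinarith
  · have h1 : Real.sinh x ≤ x := Real.sinh_le_self_iff.2 hx.le
    nlinarith

lemma besselK_bound (ν ω s : ℝ) (hω : 1 ≤ ω) :
    ‖Real.exp (ν * (s / Real.sqrt ω) - ω * (Real.cosh (s / Real.sqrt ω) - 1))‖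
      ≤ Real.exp (ν ^ 2) * Real.exp (-(1/4) * s ^ 2) := by
  have hω0 : (0 : ℝ) < ω := lt_of_lt_of_le one_pos hω
  have ha : (0 : ℝ) < Real.sqrt ω := Real.sqrt_pos.2 hω0
  have ha1 : (1 : ℝ) ≤ Real.sqrt ω := by
    rw [show (1:ℝ) = Real.sqrt 1 by simp]
    exact Real.sqrt_le_sqrt hω
  have hsq : Real.sqrt ω ^ 2 = ω := Real.sq_sqrt hω0.le
  rw [Real.norm_eq_abs, Real.abs_exp, ← Real.exp_add]
  apply Real.exp_le_exp.2
  -- exponent bound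
  have hlin : ν * (s / Real.sqrt ω) ≤ |ν| * |s| := by
    calc ν * (s / Real.sqrt ω) ≤ |ν * (s / Real.sqrt ω)| := le_abs_self _
      _ = |ν| * (|s| / Real.sqrt ω) := by
          rw [abs_mul, abs_div, abs_of_pos ha]
      _ ≤ |ν| * |s| := by
          apply mul_le_mul_of_nonneg_left _ (abs_nonneg ν)
          exact div_le_self (abs_nonneg s) ha1
  have hquad : s ^ 2 / 2 ≤ ω * (Real.cosh (s / Real.sqrt ω) - 1) := by
    set u := s / Real.sqrt ω with hu
    have hcosh : Real.cosh u - 1 = 2 * Real.sinh (u / 2) ^ 2 := by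
      have : Real.cosh (2 * (u / 2)) = 2 * Real.sinh (u / 2) ^ 2 + 1 := by
        rw [Real.cosh_two_mul, Real.cosh_sq]; ring
      rw [show (2 : ℝ) * (u / 2) = u by ring] at this
      rw [this]; ring
    have h1 : (u / 2) ^ 2 ≤ Real.sinh (u / 2) ^ 2 := besselK_sq_le_sinh_sq _
    have hu2 : ω * u ^ 2 = s ^ 2 := by
      rw [hu, div_pow, hsq]
      field_simp
    rw [hcosh]
    nlinarith
  have hamgm : |ν| * |s| ≤ ν ^ 2 + s ^ 2 / 4 := by
    nlinarith [sq_nonneg (|ν| - |s| / 2), sq_abs ν, sq_abs s]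
  nlinarith

lemma besselK_integral_limit :
    (∫ s : ℝ, Real.exp (-(s ^ 2) / 2)) = Real.sqrt (π / (1/2)) := by
  rw [← integral_gaussian (1/2)]
  refine integral_congr_ae (Filter.Eventually.of_forall fun s => ?_)
  ring_nf

theorem besselK_asymptotic (ν : ℝ) :
    Tendsto (fun ω : ℝ => besselK ν ω * Real.exp ω * Real.sqrt ω)
      atTop (nhds (Real.sqrt (π / 2))) := by
  have hconv : Tendsto (fun ω : ℝ => ∫ s : ℝ, Real.exp (ν * (s / Real.sqrt ω)
        - ω * (Real.cosh (s / Real.sqrt ω) - 1))) atTop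
      (nhds (∫ s : ℝ, Real.exp (-(s ^ 2) / 2))) := by
    apply tendsto_integral_filter_of_dominated_convergence
      (fun s => Real.exp (ν ^ 2) * Real.exp (-(1/4) * s ^ 2))
    · filter_upwards [eventually_gt_atTop (0 : ℝ)] with ω hω
      apply Continuous.aestronglyMeasurable
      exact Real.continuous_exp.comp
        ((continuous_const.mul (continuous_id.div_const _)).sub
          (continuous_const.mul ((Real.continuous_cosh.comp (continuous_id.div_const _)).sub
            continuous_const)))
    · filter_upwards [eventually_ge_atTop (1 : ℝ)] with ω hω
      exact Filter.Eventually.of_forall fun s => besselK_bound ν ω s hω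
    · exact (integrable_exp_neg_mul_sq (by norm_num : (0:ℝ) < 1/4)).const_mul _
    · exact Filter.Eventually.of_forall fun s => besselK_pointwise ν s
  rw [besselK_integral_limit] at hconv
  have hfinal := hconv.const_mul (1/2 : ℝ)
  have heq : (1/2 : ℝ) * Real.sqrt (π / (1/2)) = Real.sqrt (π / 2) := by
    rw [show π / (1/2 : ℝ) = 2 * π by ring,
      show (π / 2 : ℝ) = (2 * π) / 4 by ring,
      Real.sqrt_div (by positivity) 4,
      show (4:ℝ) = 2 ^ 2 by norm_num, Real.sqrt_sq (by norm_num : (0:ℝ) ≤ 2)]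
    ring
  rw [heq] at hfinal
  refine hfinal.congr' ?_
  filter_upwards [eventually_gt_atTop (0 : ℝ)] with ω hω
  rw [besselK_key ν ω hω]
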